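/- The tensor A of order 3 dimension 2 with a_{111} = 1 and all other entries zero is weak column adequate but not column adequate. -/
import Mathlib


open Finset Matrix

/-- For a tensor `A` of order `k+1` and dimension `n` (entries `A i f` with row index `i`
and remaining indices `f`), `tmul A x i = (A x^k)_i`. -/
def tmul {n k : ℕ} (A : Fin n → (Fin k → Fin n) → ℝ) (x : Fin n → ℝ) (i : Fin n) : ℝ :=
  ∑ f : Fin k → Fin n, A i f * ∏ j, x (f j)

/-- A tensor is column adequate if `x_i (A x^{m-1})_i ≤ 0` for all `i` implies `A x^{m-1} = 0`. -/
def ColumnAdequate {n k : ℕ} (A : Fin n → (Fin k → Fin n) → ℝ) : Prop :=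
  ∀ x : Fin n → ℝ, (∀ i, x i * tmul A x i ≤ 0) → ∀ i, tmul A x i = 0

def WeakColumnAdequate {n k : ℕ} (A : Fin n → (Fin k → Fin n) → ℝ) : Prop :=
  ∀ x : Fin n → ℝ, (∀ i, x i ^ k * tmul A x i ≤ 0) → ∀ i, tmul A x i = 0

/-- The order-3 dimension-2 tensor with `a_{111} = 1` and all other entries zero. -/
noncomputable def exTensor10 : Fin 2 → (Fin 2 → Fin 2) → ℝ := fun i f =>
  if i = 0 ∧ f = ![0, 0] then 1 else 0

lemma tmul_exTensor10 (x : Fin 2 → ℝ) (i : Fin 2) :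
    tmul exTensor10 x i = if i = 0 then x 0 * x 0 else 0 := by
  simp [tmul, exTensor10, ite_and, apply_ite (· * ∏ j, x _), Finset.sum_ite_eq',
    Fin.prod_univ_succ]

/-- This tensor is weak column adequate but not column adequate. -/
theorem exTensor10_weak_column_adequate_not_column_adequate :
    WeakColumnAdequate exTensor10 ∧ ¬ ColumnAdequate exTensor10 := by
  constructor
  · intro x hx i
    rw [tmul_exTensor10]
    split
    · have h := hx 0
      rw [tmul_exTensor10] at h
      norm_num at h
      nlinarith [sq_nonneg (x 0)]
    · rfl
  · intro h
    have := h (fun _ => -1) (by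
      intro i
      rw [tmul_exTensor10]
      split <;> norm_num) 0
    rw [tmul_exTensor10] at this
    norm_num at this
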